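/- For $x_1 > 0$, $1 - x_1 + x_2 > 0$, and $x_2 > 0$, the integral $A(x_1, x_2) := \int_T \frac{x_2}{[(x_1 - y_1)^2 + (x_2 + y_2)^2]^{3/2}}\,d\mathbf{y}$ over the reference triangle $T = \{0 < y_1, y_2,\ y_1 + y_2 < 1\}$ equals $\frac{x_1\sqrt{x_2^2 + (1-x_1)^2} + (1-x_1+x_2)\sqrt{x_1^2+x_2^2} - x_2\sqrt{(1+x_2)^2 + x_1^2}}{x_1(1-x_1+x_2)}$. -/

import Mathlib

open MeasureTheory Set

set_option maxHeartbeats 1000000 in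
lemma rpow_3half {v : ℝ} (hv : 0 < v) : v ^ ((3:ℝ)/2) = v * Real.sqrt v := by
  rw [show (3:ℝ)/2 = (1:ℝ) + 1/2 by norm_num, Real.rpow_add hv, Real.rpow_one,
    Real.sqrt_eq_rpow]

/-- FTC for the inner integral. -/
lemma inner_eval (x1 x2 a L : ℝ) (ha : 0 < a) (hL : 0 ≤ L) :
    ∫ t in Ioo (0:ℝ) L, x2 / ((x1 - t)^2 + a^2) ^ ((3:ℝ)/2)
      = x2 * ((L - x1)/(a^2 * Real.sqrt ((x1-L)^2+a^2))
            + x1/(a^2 * Real.sqrt (x1^2+a^2))) := by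
  have hBpos : ∀ t : ℝ, 0 < (x1 - t)^2 + a^2 := fun t => by positivity
  have hcont : Continuous fun t : ℝ => x2 / ((x1 - t)^2 + a^2) ^ ((3:ℝ)/2) := by
    apply continuous_const.div
    · exact (((continuous_const.sub continuous_id).pow 2).add continuous_const).rpow_const
        (fun t => Or.inr (by norm_num))
    · intro t
      exact ne_of_gt (Real.rpow_pos_of_pos (hBpos t) _)
  have key : ∀ t : ℝ, HasDerivAt
      (fun s => x2 * (s - x1) / (a^2 * Real.sqrt ((x1 - s)^2 + a^2)))
      (x2 / ((x1 - t)^2 + a^2) ^ ((3:ℝ)/2)) t := by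
    intro t
    have hB := hBpos t
    have hs : 0 < Real.sqrt ((x1 - t)^2 + a^2) := Real.sqrt_pos.2 hB
    have hnum : HasDerivAt (fun s : ℝ => x2 * (s - x1)) x2 t := by
      simpa using ((hasDerivAt_id t).sub_const x1).const_mul x2
    have hinner : HasDerivAt (fun s : ℝ => (x1 - s)^2 + a^2)
        (2 * (x1 - t) * (-1)) t := by
      have : HasDerivAt (fun s : ℝ => x1 - s) (-1) t := by
        simpa using (hasDerivAt_id t).const_sub x1
      simpa using (this.pow 2).add_const (a^2)
    have hsqrt : HasDerivAt (fun s : ℝ => Real.sqrt ((x1 - s)^2 + a^2))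
        (2 * (x1 - t) * (-1) / (2 * Real.sqrt ((x1 - t)^2 + a^2))) t := by
      exact (Real.hasDerivAt_sqrt (ne_of_gt hB)).comp t hinner |>.congr_deriv (by ring)
    have hden : HasDerivAt (fun s : ℝ => a^2 * Real.sqrt ((x1 - s)^2 + a^2))
        (a^2 * (2 * (x1 - t) * (-1) / (2 * Real.sqrt ((x1 - t)^2 + a^2)))) t :=
      hsqrt.const_mul _
    have hd := hnum.div hden (by positivity)
    refine hd.congr_deriv ?_
    have hsq : Real.sqrt ((x1 - t)^2 + a^2) ^ 2 = (x1 - t)^2 + a^2 :=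
      Real.sq_sqrt hB.le
    rw [rpow_3half hB]
    set S := Real.sqrt ((x1 - t)^2 + a^2) with hS
    rw [← hsq]
    field_simp
    linear_combination x2 * hsq
  rw [← integral_Ioc_eq_integral_Ioo, ← intervalIntegral.integral_of_le hL,
    intervalIntegral.integral_eq_sub_of_hasDerivAt (fun t _ => key t)
      (hcont.intervalIntegrable 0 L)]
  field_simp
  ring

lemma outer_eval (x1 x2 : ℝ) (h1 : 0 < x1) (h2 : 0 < x2) (h3 : 0 < 1 - x1 + x2) :
    ∫ y in Ioo (0:ℝ) 1, x2 * (((1-y) - x1)/((x2+y)^2 * Real.sqrt ((x1-(1-y))^2+(x2+y)^2))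
        + x1/((x2+y)^2 * Real.sqrt (x1^2+(x2+y)^2)))
      = (x1 * Real.sqrt (x2 ^ 2 + (1 - x1) ^ 2)
          + (1 - x1 + x2) * Real.sqrt (x1 ^ 2 + x2 ^ 2)
          - x2 * Real.sqrt ((1 + x2) ^ 2 + x1 ^ 2)) / (x1 * (1 - x1 + x2)) := by
  have hu : ∀ y ∈ uIcc (0:ℝ) 1, 0 < x2 + y := by
    intro y hy
    rw [uIcc_of_le (by norm_num)] at hy
    have := hy.1; linarith
  have hcont : ContinuousOn (fun y : ℝ => x2 * (((1-y) - x1)/((x2+y)^2 * Real.sqrt ((x1-(1-y))^2+(x2+y)^2))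
        + x1/((x2+y)^2 * Real.sqrt (x1^2+(x2+y)^2)))) (uIcc (0:ℝ) 1) := by
    apply continuousOn_const.mul
    apply ContinuousOn.add
    · apply ContinuousOn.div (by fun_prop) (by fun_prop)
      intro y hy
      have h := hu y hy
      have : 0 < Real.sqrt ((x1-(1-y))^2+(x2+y)^2) := Real.sqrt_pos.2 (by positivity)
      positivity
    · apply ContinuousOn.div (by fun_prop) (by fun_prop)
      intro y hy
      have h := hu y hy
      have : 0 < Real.sqrt (x1^2+(x2+y)^2) := Real.sqrt_pos.2 (by positivity)
      positivity
  have key : ∀ y ∈ uIcc (0:ℝ) 1, HasDerivAt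
      (fun y : ℝ => -(x2 * Real.sqrt (((1-x1+x2)-(x2+y))^2+(x2+y)^2))/((1-x1+x2)*(x2+y))
          - x2 * Real.sqrt (x1^2+(x2+y)^2)/(x1*(x2+y)))
      (x2 * (((1-y) - x1)/((x2+y)^2 * Real.sqrt ((x1-(1-y))^2+(x2+y)^2))
        + x1/((x2+y)^2 * Real.sqrt (x1^2+(x2+y)^2)))) y := by
    intro y hy
    have huy : 0 < x2 + y := hu y hy
    have hP : 0 < ((1-x1+x2)-(x2+y))^2+(x2+y)^2 := by positivity
    have hQ : 0 < x1^2+(x2+y)^2 := by positivity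
    have hRpos : 0 < Real.sqrt (((1-x1+x2)-(x2+y))^2+(x2+y)^2) := Real.sqrt_pos.2 hP
    have hSpos : 0 < Real.sqrt (x1^2+(x2+y)^2) := Real.sqrt_pos.2 hQ
    have hud : HasDerivAt (fun y : ℝ => x2 + y) 1 y := by
      simpa using (hasDerivAt_id y).const_add x2
    have hPd : HasDerivAt (fun y : ℝ => ((1-x1+x2)-(x2+y))^2+(x2+y)^2)
        (2*((1-x1+x2)-(x2+y))*(-1) + 2*(x2+y)) y := by
      have h1d : HasDerivAt (fun y : ℝ => (1-x1+x2)-(x2+y)) (-1) y := by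
        simpa using hud.const_sub (1-x1+x2)
      simpa using (h1d.fun_pow 2).fun_add (hud.fun_pow 2)
    have hQd : HasDerivAt (fun y : ℝ => x1^2+(x2+y)^2) (2*(x2+y)) y := by
      simpa using (hud.pow 2).const_add (x1^2)
    have hRd : HasDerivAt (fun y : ℝ => Real.sqrt (((1-x1+x2)-(x2+y))^2+(x2+y)^2))
        ((2*((1-x1+x2)-(x2+y))*(-1) + 2*(x2+y)) / (2 * Real.sqrt (((1-x1+x2)-(x2+y))^2+(x2+y)^2))) y := by
      exact ((Real.hasDerivAt_sqrt (ne_of_gt hP)).comp y hPd).congr_deriv (by ring)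
    have hSd : HasDerivAt (fun y : ℝ => Real.sqrt (x1^2+(x2+y)^2))
        ((2*(x2+y)) / (2 * Real.sqrt (x1^2+(x2+y)^2))) y := by
      exact ((Real.hasDerivAt_sqrt (ne_of_gt hQ)).comp y hQd).congr_deriv (by ring)
    have hsqR : Real.sqrt (((1-x1+x2)-(x2+y))^2+(x2+y)^2) ^ 2
        = ((1-x1+x2)-(x2+y))^2+(x2+y)^2 := Real.sq_sqrt hP.le
    have hsqS : Real.sqrt (x1^2+(x2+y)^2) ^ 2 = x1^2+(x2+y)^2 := Real.sq_sqrt hQ.le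
    set R := Real.sqrt (((1-x1+x2)-(x2+y))^2+(x2+y)^2) with hRdef
    set S := Real.sqrt (x1^2+(x2+y)^2) with hSdef
    have hT1 : HasDerivAt (fun y : ℝ => -(x2 * Real.sqrt (((1-x1+x2)-(x2+y))^2+(x2+y)^2))/((1-x1+x2)*(x2+y)))
        (x2 * (((1-y) - x1)/((x2+y)^2 * R))) y := by
      refine ((hRd.const_mul x2).neg.div (hud.const_mul (1-x1+x2)) (by positivity)).congr_deriv ?_
      field_simp
      simp only [Pi.neg_apply]
      rw [← hRdef]
      linear_combination x2 * hsqR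
    have hT2 : HasDerivAt (fun y : ℝ => x2 * Real.sqrt (x1^2+(x2+y)^2)/(x1*(x2+y)))
        (-(x2 * (x1/((x2+y)^2 * S)))) y := by
      refine ((hSd.const_mul x2).div (hud.const_mul x1) (by positivity)).congr_deriv ?_
      field_simp
      rw [← hSdef]
      linear_combination (-1) * hsqS
    refine (hT1.sub hT2).congr_deriv ?_
    rw [show (x1-(1-y))^2+(x2+y)^2 = ((1-x1+x2)-(x2+y))^2+(x2+y)^2 from by ring, ← hRdef]
    ring
  rw [← integral_Ioc_eq_integral_Ioo, ← intervalIntegral.integral_of_le (by norm_num : (0:ℝ) ≤ 1),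
    intervalIntegral.integral_eq_sub_of_hasDerivAt key (hcont.intervalIntegrable)]
  rw [show ((1-x1+x2)-(x2+1))^2+(x2+1)^2 = (1+x2)^2+x1^2 from by ring,
      show x1^2+(x2+1)^2 = (1+x2)^2+x1^2 from by ring,
      show ((1-x1+x2)-(x2+0))^2+(x2+0)^2 = x2^2+(1-x1)^2 from by ring,
      show x1^2+(x2+0)^2 = x1^2+x2^2 from by ring]
  have e1 : (0:ℝ) < 1 + x2 := by linarith
  field_simp
  ring

/-- The open reference triangle in `ℝ²`. -/
def refTri : Set (ℝ × ℝ) := {y : ℝ × ℝ | 0 < y.1 ∧ 0 < y.2 ∧ y.1 + y.2 < 1}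

/-- Explicit evaluation of the kernel integral
`A(x) = ∫_T x₂ / ((x₁-y₁)² + (x₂+y₂)²)^{3/2} dy` over the reference triangle. -/
theorem stmt5 (x1 x2 : ℝ) (h1 : 0 < x1) (h2 : 0 < x2) (h3 : 0 < 1 - x1 + x2) :
    (∫ y in refTri, x2 / ((x1 - y.1) ^ 2 + (x2 + y.2) ^ 2) ^ ((3 : ℝ) / 2))
      = (x1 * Real.sqrt (x2 ^ 2 + (1 - x1) ^ 2)
          + (1 - x1 + x2) * Real.sqrt (x1 ^ 2 + x2 ^ 2)
          - x2 * Real.sqrt ((1 + x2) ^ 2 + x1 ^ 2)) / (x1 * (1 - x1 + x2)) := by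
  have fubini : (∫ y in refTri, x2 / ((x1 - y.1) ^ 2 + (x2 + y.2) ^ 2) ^ ((3 : ℝ) / 2))
      = ∫ y2 in Ioo (0:ℝ) 1, ∫ y1 in Ioo (0:ℝ) (1-y2),
          x2 / ((x1 - y1) ^ 2 + (x2 + y2) ^ 2) ^ ((3 : ℝ) / 2) := by
    set f : ℝ × ℝ → ℝ := fun y => x2 / ((x1 - y.1) ^ 2 + (x2 + y.2) ^ 2) ^ ((3 : ℝ) / 2) with hf
    have hopen : IsOpen refTri := by
      have : refTri = {y : ℝ × ℝ | 0 < y.1} ∩ ({y | 0 < y.2} ∩ {y | y.1 + y.2 < 1}) := rfl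
      rw [this]
      exact (isOpen_lt continuous_const continuous_fst).inter
        ((isOpen_lt continuous_const continuous_snd).inter
          (isOpen_lt (continuous_fst.add continuous_snd) continuous_const))
    have hmeas : MeasurableSet refTri := hopen.measurableSet
    have hden : Continuous fun y : ℝ × ℝ => ((x1 - y.1) ^ 2 + (x2 + y.2) ^ 2) ^ ((3:ℝ)/2) :=
      (((continuous_const.sub continuous_fst).pow 2).add
        ((continuous_const.add continuous_snd).pow 2)).rpow_const (fun y => Or.inr (by norm_num))
    have hm : Measurable f := measurable_const.div hden.measurable
    have hsub : refTri ⊆ Ioo 0 1 ×ˢ Ioo 0 1 := by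
      rintro ⟨a, b⟩ ⟨ha, hb, hab⟩
      exact ⟨⟨ha, by dsimp at *; linarith⟩, ⟨hb, by dsimp at *; linarith⟩⟩
    have hfin : volume refTri < ⊤ := by
      refine lt_of_le_of_lt (measure_mono hsub) ?_
      rw [Measure.volume_eq_prod, Measure.prod_prod, Real.volume_Ioo]
      simp
    have hion : IntegrableOn f refTri := by
      have hconst : IntegrableOn (fun _ : ℝ × ℝ => x2 / (x2 ^ 2) ^ ((3:ℝ)/2)) refTri :=
        integrableOn_const hfin.ne
      refine Integrable.mono' hconst (hm.aestronglyMeasurable.restrict) ?_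
      refine (ae_restrict_iff' hmeas).2 (ae_of_all _ ?_)
      rintro ⟨a, b⟩ ⟨ha, hb, hab⟩
      dsimp at hb ⊢
      have hbase : x2 ^ 2 ≤ (x1 - a) ^ 2 + (x2 + b) ^ 2 := by nlinarith [sq_nonneg (x1 - a)]
      have hpow : (x2^2) ^ ((3:ℝ)/2) ≤ ((x1 - a) ^ 2 + (x2 + b) ^ 2) ^ ((3:ℝ)/2) :=
        Real.rpow_le_rpow (by positivity) hbase (by norm_num)
      rw [abs_of_nonneg (by positivity)]
      exact div_le_div_of_nonneg_left h2.le (by positivity) hpow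
    rw [← integral_indicator hmeas, Measure.volume_eq_prod,
      integral_prod_symm _ ((integrable_indicator_iff hmeas).2 (by rwa [← Measure.volume_eq_prod]))]
    have h5 : ∀ y2 : ℝ, (∫ y1, refTri.indicator f (y1, y2))
        = (Ioo (0:ℝ) 1).indicator (fun y2 => ∫ y1 in Ioo (0:ℝ) (1-y2), f (y1, y2)) y2 := by
      intro y2
      by_cases hy2 : y2 ∈ Ioo (0:ℝ) 1
      · rw [indicator_of_mem hy2]
        have hpt : ∀ y1 : ℝ, refTri.indicator f (y1, y2)
            = (Ioo (0:ℝ) (1-y2)).indicator (fun y1 => f (y1, y2)) y1 := by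
          intro y1
          by_cases h : y1 ∈ Ioo (0:ℝ) (1-y2)
          · rw [indicator_of_mem h, indicator_of_mem]
            exact ⟨h.1, hy2.1, by have := h.2; dsimp; linarith⟩
          · rw [indicator_of_notMem h, indicator_of_notMem]
            rintro ⟨ha, hb, hab⟩
            exact h ⟨ha, by dsimp at hab; linarith⟩
        simp_rw [hpt]
        rw [integral_indicator measurableSet_Ioo]
      · rw [indicator_of_notMem hy2]
        have hpt : ∀ y1 : ℝ, refTri.indicator f (y1, y2) = 0 := by
          intro y1
          apply indicator_of_notMem
          rintro ⟨ha, hb, hab⟩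
          dsimp at ha hb hab
          simp only [mem_Ioo, not_and, not_lt] at hy2
          have := hy2 hb
          linarith
        simp_rw [hpt]
        simp
    rw [show (fun y : ℝ × ℝ => x2 / ((x1 - y.1) ^ 2 + (x2 + y.2) ^ 2) ^ ((3:ℝ)/2)) = f from rfl]
    simp_rw [h5]
    rw [integral_indicator measurableSet_Ioo]
  rw [fubini]
  refine (setIntegral_congr_fun measurableSet_Ioo ?_).trans (outer_eval x1 x2 h1 h2 h3)
  intro y2 hy2
  have ha : 0 < x2 + y2 := by have := hy2.1; linarith
  have hL : (0:ℝ) ≤ 1 - y2 := by have := hy2.2; linarith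
  exact inner_eval x1 x2 (x2 + y2) (1 - y2) ha hL
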